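/- arXiv:1502.07281 — 3 statements merged into one kernel-verified Lean document; each statement's English description precedes it below -/
import Mathlib

section
/- Let p ≥ 5 be a prime and let d₁, d₂ be distinct integers with 1 ≤ d₁, d₂ ≤ p−2. Then there exist nonnegative integers j₁, j₂ with 0 ≤ j₁, j₂ < p, (j₁, j₂) ≠ (0, 0), such that d₁·j₁ + d₂·j₂ ≡ 0 (mod p−1) and j₁ + j₂ ≤ (p−1)/2. -/
lemma helper_refl (p d₁ d₂ a b : ℕ) (hp5 : 5 ≤ p) (hn2 : 2 ∣ (p - 1))
    (hsum : 2 ∣ (d₁ + d₂))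
    (ha : 1 ≤ a) (ha' : a + 1 ≤ (p - 1) / 2) (hb : 1 ≤ b) (hb' : b ≤ (p - 1) / 2)
    (hdvd : (p - 1) ∣ d₁ * a + d₂ * b) :
    ∃ j₁ j₂ : ℕ, j₁ < p ∧ j₂ < p ∧ (j₁, j₂) ≠ (0, 0) ∧
      (p - 1) ∣ (d₁ * j₁ + d₂ * j₂) ∧ j₁ + j₂ ≤ (p - 1) / 2 := by
  obtain ⟨q, hq⟩ := hn2
  by_cases hle : a + b ≤ (p - 1) / 2
  · exact ⟨a, b, by omega, by omega, by simp [Prod.ext_iff]; omega, hdvd, hle⟩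
  · have haq : a ≤ q := by omega
    have hbq : b ≤ q := by omega
    refine ⟨q - a, q - b, by omega, by omega, by simp [Prod.ext_iff]; omega, ?_, by omega⟩
    have h1 : (p - 1) ∣ (d₁ + d₂) * q := by
      obtain ⟨k, hk⟩ := hsum
      exact ⟨k, by rw [hk, hq]; ring⟩
    have h3 : d₁ * a + d₂ * b ≤ (d₁ + d₂) * q := by
      rw [add_mul]
      exact Nat.add_le_add (Nat.mul_le_mul_left _ haq) (Nat.mul_le_mul_left _ hbq)
    have h2 : d₁ * (q - a) + d₂ * (q - b) = (d₁ + d₂) * q - (d₁ * a + d₂ * b) := by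
      zify [haq, hbq, h3]; ring
    rw [h2]
    exact Nat.dvd_sub h1 hdvd

theorem stmt_0 (p : ℕ) (hp : p.Prime) (hp5 : 5 ≤ p)
    (d₁ d₂ : ℕ) (hd₁ : 1 ≤ d₁) (hd₁' : d₁ ≤ p - 2)
    (hd₂ : 1 ≤ d₂) (hd₂' : d₂ ≤ p - 2) (hne : d₁ ≠ d₂) :
    ∃ j₁ j₂ : ℕ, j₁ < p ∧ j₂ < p ∧ (j₁, j₂) ≠ (0, 0) ∧
      (p - 1) ∣ (d₁ * j₁ + d₂ * j₂) ∧ j₁ + j₂ ≤ (p - 1) / 2 := by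
  have hodd : p % 2 = 1 := by
    rcases hp.eq_two_or_odd with h | h
    · omega
    · exact h
  have hn2 : 2 ∣ (p - 1) := by omega
  have h4 : 4 ≤ p - 1 := by omega
  by_cases hg1 : Nat.gcd d₁ (p - 1) = 1
  · by_cases hg2 : Nat.gcd d₂ (p - 1) = 1
    · -- both coprime to p-1, hence odd
      have hd1odd : d₁ % 2 = 1 := by
        by_contra h
        have h2 : 2 ∣ d₁ := by omega
        have := Nat.dvd_gcd h2 hn2
        rw [hg1] at this
        omega
      have hd2odd : d₂ % 2 = 1 := by
        by_contra h
        have h2 : 2 ∣ d₂ := by omega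
        have := Nat.dvd_gcd h2 hn2
        rw [hg2] at this
        omega
      have hsum : 2 ∣ (d₁ + d₂) := by omega
      obtain ⟨c, -, hc⟩ := Nat.exists_mul_mod_eq_one_of_coprime hg1 (by omega)
      set e := d₂ * c % (p - 1) with he
      have hen : e < p - 1 := Nat.mod_lt _ (by omega)
      have hde : d₁ * e ≡ d₂ [MOD (p - 1)] := by
        calc d₁ * e ≡ d₁ * (d₂ * c) [MOD (p - 1)] :=
              Nat.ModEq.mul_left d₁ (Nat.mod_modEq _ _)
          _ = d₂ * (d₁ * c) := by ring
          _ ≡ d₂ * (d₁ * c % (p - 1)) [MOD (p - 1)] :=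
              Nat.ModEq.mul_left d₂ (Nat.mod_modEq _ _).symm
          _ = d₂ * 1 := by rw [hc]
          _ = d₂ := mul_one d₂
      have he0 : e ≠ 0 := by
        intro h
        have h' : (d₁ * e) % (p - 1) = d₂ % (p - 1) := hde
        rw [h, mul_zero, Nat.zero_mod, Nat.mod_eq_of_lt (by omega : d₂ < p - 1)] at h'
        omega
      have he1 : e ≠ 1 := by
        intro h
        have h' : (d₁ * e) % (p - 1) = d₂ % (p - 1) := hde
        rw [h, mul_one, Nat.mod_eq_of_lt (by omega : d₁ < p - 1),
          Nat.mod_eq_of_lt (by omega : d₂ < p - 1)] at h'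
        exact hne h'
      have heh : e ≠ (p - 1) / 2 := by
        intro h
        have h' : (d₁ * e) % (p - 1) = d₂ % (p - 1) := hde
        obtain ⟨k, hk⟩ : ∃ k, d₁ = 2 * k + 1 := ⟨d₁ / 2, by omega⟩
        have hmul : d₁ * e = (p - 1) / 2 + k * (p - 1) := by
          rw [h, hk]; 
          have : 2 * ((p - 1) / 2) = p - 1 := by omega
          calc (2 * k + 1) * ((p - 1) / 2) = k * (2 * ((p - 1) / 2)) + (p - 1) / 2 := by ring
            _ = (p - 1) / 2 + k * (p - 1) := by rw [this]; ring
        rw [hmul, Nat.add_mul_mod_self_right, Nat.mod_eq_of_lt (by omega),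
          Nat.mod_eq_of_lt (by omega : d₂ < p - 1)] at h'
        -- d₂ = (p-1)/2
        have hdvd2 : ((p - 1) / 2) ∣ Nat.gcd d₂ (p - 1) :=
          Nat.dvd_gcd ⟨1, by omega⟩ ⟨2, by omega⟩
        rw [hg2] at hdvd2
        have := Nat.le_of_dvd one_pos hdvd2
        omega
      have hkey : ∀ j : ℕ, e * j ≤ p - 1 →
          (p - 1) ∣ d₁ * (p - 1 - e * j) + d₂ * j := by
        intro j hj
        have hmod : d₁ * (e * j) ≡ d₂ * j [MOD (p - 1)] := by
          have := hde.mul_right j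
          rwa [mul_assoc] at this
        have hdInt : ((p - 1 : ℕ) : ℤ) ∣ ((d₂ * j : ℕ) : ℤ) - ((d₁ * (e * j) : ℕ) : ℤ) :=
          (Nat.modEq_iff_dvd).mp hmod
        obtain ⟨k, hk⟩ := hdInt
        rw [← Int.natCast_dvd_natCast]
        push_cast [hj]
        push_cast at hk
        refine ⟨(d₁ : ℤ) + k, ?_⟩
        linear_combination hk
      rcases lt_or_ge ((p - 1) / 2) e with hbig | hsmall
      · -- e > (p-1)/2 : take j = 1
        have hdvd := hkey 1 (by omega)
        rw [show e * 1 = e from mul_one e] at hdvd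
        exact helper_refl p d₁ d₂ (p - 1 - e) 1 hp5 hn2 hsum (by omega) (by omega)
          (by omega) (by omega) hdvd
      · have he2 : 2 ≤ e := by omega
        have hee : e ≤ (p - 1) / 2 - 1 := by omega
        have hdm := Nat.div_add_mod ((p - 1) / 2) e
        have hr : (p - 1) / 2 % e < e := Nat.mod_lt _ (by omega)
        set a := (p - 1) / 2 / e with hadef
        set j := a + 1 with hjdef
        have hm : e * j = e * a + e := by rw [hjdef, mul_add, mul_one]
        have h2a : 2 * a ≤ e * a := Nat.mul_le_mul_right a he2
        have hm1 : (p - 1) / 2 + 1 ≤ e * j := by omega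
        have hm2 : e * j ≤ p - 1 - 1 := by omega
        have hjb : j ≤ (p - 1) / 2 := by omega
        exact helper_refl p d₁ d₂ (p - 1 - e * j) j hp5 hn2 hsum (by omega) (by omega)
          (by omega) hjb (hkey j (by omega))
    · -- gcd(d₂, p-1) = g ≥ 2
      set g := Nat.gcd d₂ (p - 1) with hg
      have hgd : g ∣ d₂ := Nat.gcd_dvd_left _ _
      have hgn : g ∣ (p - 1) := Nat.gcd_dvd_right _ _
      have hg0 : g ≠ 0 := by
        intro h; rw [hg] at h; have := Nat.eq_zero_of_gcd_eq_zero_left h; omega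
      have hg2' : 2 ≤ g := by omega
      obtain ⟨b, hb⟩ := hgn
      obtain ⟨a, ha⟩ := hgd
      have h2b : 2 * b ≤ g * b := Nat.mul_le_mul_right b hg2'
      have hb1 : 1 ≤ b := Nat.pos_of_ne_zero (fun h => by rw [h, mul_zero] at hb; omega)
      refine ⟨0, b, by omega, by omega, by simp [Prod.ext_iff]; omega, ?_, by omega⟩
      refine ⟨a, ?_⟩
      rw [ha, hb]; ring
  · -- gcd(d₁, p-1) = g ≥ 2
    set g := Nat.gcd d₁ (p - 1) with hg
    have hgd : g ∣ d₁ := Nat.gcd_dvd_left _ _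
    have hgn : g ∣ (p - 1) := Nat.gcd_dvd_right _ _
    have hg0 : g ≠ 0 := by
      intro h; rw [hg] at h; have := Nat.eq_zero_of_gcd_eq_zero_left h; omega
    have hg2' : 2 ≤ g := by omega
    obtain ⟨b, hb⟩ := hgn
    obtain ⟨a, ha⟩ := hgd
    have h2b : 2 * b ≤ g * b := Nat.mul_le_mul_right b hg2'
    have hb1 : 1 ≤ b := Nat.pos_of_ne_zero (fun h => by rw [h, mul_zero] at hb; omega)
    refine ⟨b, 0, by omega, by omega, by simp [Prod.ext_iff]; omega, ?_, by omega⟩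
    refine ⟨a, ?_⟩
    rw [ha, hb]; ring
end

section
/- Let p ≥ 5 be prime and let d₁, d₂ be odd integers with 1 ≤ d₁ ≠ d₂ ≤ p−2 and gcd(d₁, p−1) = gcd(d₂, p−1) = 1. Then there exist integers i, j with 0 ≤ i, j ≤ (p−1)/2, (i, j) ≠ (0, 0), such that d₁·i + d₂·j ≡ 0 (mod p−1) and i + j ≤ (p−1)/2. -/
/-- Doubling lemma: from a solution (i,j) with 2i + j ≤ n we can reach one with
additionally 2j ≤ n, preserving divisibility. -/
lemma stmt_9_aux (n d₁ d₂ : ℕ) : ∀ j i : ℕ, 1 ≤ i → 1 ≤ j → 2*i + j ≤ n →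
    n ∣ d₁*i + d₂*j →
    ∃ i' j', 1 ≤ i' ∧ 1 ≤ j' ∧ 2*i' + j' ≤ n ∧ 2*j' ≤ n ∧ n ∣ d₁*i' + d₂*j' := by
  intro j
  induction j using Nat.strong_induction_on with
  | _ j ih =>
    intro i hi hj hsum hdvd
    by_cases h : 2*j ≤ n
    · exact ⟨i, j, hi, hj, hsum, h, hdvd⟩
    · have h2 : n ≤ 2*j := by omega
      have e : d₁*(2*i) + d₂*(2*j - n) = 2*(d₁*i + d₂*j) - d₂*n := by
        zify [h2, show d₂*n ≤ 2*(d₁*i + d₂*j) from by nlinarith]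
        ring
      have hdvd' : n ∣ d₁*(2*i) + d₂*(2*j - n) := by
        rw [e]
        exact Nat.dvd_sub (Dvd.dvd.mul_left hdvd 2) (dvd_mul_left n d₂)
      exact ih (2*j - n) (by omega) (2*i) (by omega) (by omega) (by omega) hdvd'

theorem stmt_9 (p : ℕ) (hp : p.Prime) (hp5 : 5 ≤ p)
    (d₁ d₂ : ℕ) (hodd₁ : Odd d₁) (hodd₂ : Odd d₂)
    (hd₁ : 1 ≤ d₁) (hd₁' : d₁ ≤ p - 2) (hd₂ : 1 ≤ d₂) (hd₂' : d₂ ≤ p - 2)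
    (hne : d₁ ≠ d₂)
    (hg₁ : Nat.gcd d₁ (p - 1) = 1) (hg₂ : Nat.gcd d₂ (p - 1) = 1) :
    ∃ i j : ℕ, i ≤ (p - 1) / 2 ∧ j ≤ (p - 1) / 2 ∧ (i, j) ≠ (0, 0) ∧
      (p - 1) ∣ (d₁ * i + d₂ * j) ∧ i + j ≤ (p - 1) / 2 := by
  set n := p - 1 with hn
  have hpodd : Odd p := hp.odd_of_ne_two (by omega)
  have hneven : 2 ∣ n := by
    obtain ⟨m, hm⟩ := hpodd
    omega
  have hn4 : 4 ≤ n := by omega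
  haveI : NeZero n := ⟨by omega⟩
  -- construct the initial solution (1, j₀)
  have hcop : Nat.Coprime d₂ n := hg₂
  set z : ZMod n := (d₂ : ZMod n)⁻¹ * (-(d₁ : ZMod n)) with hz
  set j₀ : ℕ := z.val with hj₀
  have hzval : ((j₀ : ℕ) : ZMod n) = z := ZMod.natCast_rightInverse z
  have hd₂z : (d₂ : ZMod n) * z = -(d₁ : ZMod n) := by
    rw [hz, ← mul_assoc, ZMod.coe_mul_inv_eq_one d₂ hcop, one_mul]
  have hdvd₀ : n ∣ d₁ * 1 + d₂ * j₀ := by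
    have : ((d₁ * 1 + d₂ * j₀ : ℕ) : ZMod n) = 0 := by
      push_cast
      rw [hzval, hd₂z]
      ring
    exact (ZMod.natCast_eq_zero_iff _ _).mp this
  have hj₀lt : j₀ < n := ZMod.val_lt z
  have hj₀ne : j₀ ≠ 0 := by
    intro h0
    rw [h0, mul_zero, add_zero, mul_one] at hdvd₀
    have := Nat.le_of_dvd (by omega) hdvd₀
    omega
  have hj₀ne' : j₀ ≠ n - 1 := by
    intro h1
    have : (j₀ : ZMod n) = -1 := by
      rw [h1]
      push_cast [show 1 ≤ n from by omega]
      simp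
    have heq : (d₁ : ZMod n) = (d₂ : ZMod n) := by
      have h : (d₂ : ZMod n) * ((j₀ : ℕ) : ZMod n) = -(d₁ : ZMod n) := by
        rw [hzval]; exact hd₂z
      rw [this, mul_neg_one, neg_inj] at h
      exact h.symm
    have := (ZMod.natCast_eq_natCast_iff d₁ d₂ n).mp heq
    have := Nat.ModEq.eq_of_lt_of_lt this (by omega) (by omega)
    exact hne this
  obtain ⟨i, j, hi1, hj1, hsumn, hjhalf, hdvd⟩ :=
    stmt_9_aux n d₁ d₂ j₀ 1 le_rfl (by omega) (by omega) hdvd₀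
  by_cases hs : i + j ≤ n / 2
  · refine ⟨i, j, by omega, by omega, ?_, hdvd, hs⟩
    simp only [ne_eq, Prod.mk.injEq, not_and]
    omega
  · refine ⟨n/2 - i, n/2 - j, by omega, by omega, ?_, ?_, by omega⟩
    · simp only [ne_eq, Prod.mk.injEq, not_and]
      omega
    · have hile : i ≤ n/2 := by omega
      have hjle : j ≤ n/2 := by omega
      have hle : d₁ * i + d₂ * j ≤ (d₁ + d₂) * (n/2) := by
        have := Nat.mul_le_mul_left d₁ hile
        have := Nat.mul_le_mul_left d₂ hjle
        nlinarith
      have e : d₁ * (n/2 - i) + d₂ * (n/2 - j)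
          = (d₁ + d₂) * (n/2) - (d₁ * i + d₂ * j) := by
        zify [hile, hjle, hle]
        ring
      have h2 : n ∣ (d₁ + d₂) * (n/2) := by
        obtain ⟨k, hk⟩ : 2 ∣ d₁ + d₂ := by
          obtain ⟨a, ha⟩ := hodd₁
          obtain ⟨b, hb⟩ := hodd₂
          omega
        refine ⟨k, ?_⟩
        rw [hk]
        have : 2 * (n/2) = n := by omega
        calc 2 * k * (n/2) = k * (2 * (n/2)) := by ring
          _ = n * k := by rw [this]; ring
      rw [e]
      exact Nat.dvd_sub h2 hdvd
end

section
/- Let n be an even positive integer and let j be an integer with 1 ≤ j ≤ n−2. Then there exists an integer k ≥ 0 such that the residue of 2^k·j modulo n, taken in [0, n−1], is at most n/2, and moreover 2^k ≤ n/2 can be chosen. -/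
theorem stmt_15 (n : ℕ) (hn : 0 < n) (heven : Even n)
    (j : ℕ) (hj1 : 1 ≤ j) (hj2 : j ≤ n - 2) :
    ∃ k : ℕ, (2 ^ k * j) % n ≤ n / 2 ∧ 2 ^ k ≤ n / 2 := by
  obtain ⟨t, ht⟩ := heven
  have hn4 : 4 ≤ n := by omega
  have hhalf : n / 2 = t := by omega
  by_cases hjle : j ≤ n / 2
  · refine ⟨0, ?_, by omega⟩
    rw [pow_zero, one_mul, Nat.mod_eq_of_lt (by omega : j < n)]
    exact hjle
  · push_neg at hjle
    set m := n - j with hm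
    have hm2 : 2 ≤ m := by omega
    have hmlt : m < n / 2 := by omega
    have hex : ∃ k, n / 2 ≤ 2 ^ k * m := by
      refine ⟨n, le_trans (le_of_lt ?_) (Nat.le_mul_of_pos_right _ (by omega))⟩
      exact lt_of_le_of_lt (Nat.div_le_self n 2) (Nat.lt_two_pow_self (n := n))
    set k := Nat.find hex with hk
    have hk1 : 1 ≤ k := by
      rcases Nat.eq_zero_or_pos k with h0 | h
      · have := Nat.find_spec hex
        rw [← hk, h0] at this
        simp at this
        omega
      · exact h
    have hmin : 2 ^ (k - 1) * m < n / 2 := by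
      have := Nat.find_min hex (m := k - 1) (by omega)
      omega
    have hspec : n / 2 ≤ 2 ^ k * m := Nat.find_spec hex
    have hpow : 2 ^ k = 2 * 2 ^ (k - 1) := by
      rw [← pow_succ']
      congr 1
      omega
    have hlt : 2 ^ k * m < n := by
      rw [hpow, Nat.mul_assoc]
      omega
    have hle : 2 ^ k ≤ n / 2 := by
      calc 2 ^ k = 2 * 2 ^ (k - 1) := hpow
        _ ≤ 2 ^ (k - 1) * m := by nlinarith [pow_pos (by norm_num : (0:ℕ) < 2) (k-1)]
        _ ≤ n / 2 := le_of_lt hmin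
    refine ⟨k, ?_, hle⟩
    have hj : j = n - m := by omega
    have key : 2 ^ k * j = (2 ^ k - 1) * n + (n - 2 ^ k * m) := by
      have h1 : 1 ≤ 2 ^ k := Nat.one_le_two_pow
      have h2 : 2 ^ k * j + 2 ^ k * m = 2 ^ k * n := by
        rw [← Nat.mul_add]
        congr 1
        omega
      have h3 : (2 ^ k - 1) * n = 2 ^ k * n - n := by
        rw [Nat.sub_mul, one_mul]
      have h4 : n ≤ 2 ^ k * n := Nat.le_mul_of_pos_left n (by positivity)
      omega
    rw [key, Nat.add_comm, Nat.add_mul_mod_self_right,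
      Nat.mod_eq_of_lt (by omega)]
    omega
end
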